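/- Let 0 < α ≤ 1 and let h belong to the class G(α). Then there exists an analytic function ω on the open unit disk 𝔻 with ω(0) = 0 and |ω(z)| < 1 for all z ∈ 𝔻 such that h'(z) = (1 − ω(z))^α for all z ∈ 𝔻; in particular h'(z) is subordinate to (1 − z)^α. -/

import Mathlib

open Complex Metric


section JPAux
open Set Filter Topology intervalIntegral


lemma exists_primitive {f : ℂ → ℂ} (hf : AnalyticOnNhd ℂ f (ball (0:ℂ) 1)) :
    ∃ F : ℂ → ℂ, F 0 = 0 ∧ ∀ z ∈ ball (0:ℂ) 1, HasDerivAt F (f z) z := by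
  have hfd : ∀ w ∈ ball (0:ℂ) 1, HasDerivAt f (deriv f w) w := fun w hw =>
    ((hf w hw).differentiableAt).hasDerivAt
  have hfc : ContinuousOn f (ball (0:ℂ) 1) := fun w hw => ((hf w hw).continuousAt).continuousWithinAt
  have hfc' : ContinuousOn (deriv f) (ball (0:ℂ) 1) := fun w hw =>
    (((hf.deriv) w hw).continuousAt).continuousWithinAt
  refine ⟨fun z => ∫ t in (0:ℝ)..1, z * f ((t:ℂ) * z), by simp, ?_⟩
  intro z₀ hz₀
  rw [mem_ball_zero_iff] at hz₀
  set ε : ℝ := (1 - ‖z₀‖) / 2 with hε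
  have hεpos : 0 < ε := by simp only [hε]; linarith
  -- membership lemma
  have hmem : ∀ (t : ℝ) (x : ℂ), t ∈ Icc (0:ℝ) 1 → x ∈ closedBall z₀ ε → (t:ℂ) * x ∈ ball (0:ℂ) 1 := by
    intro t x ht hx
    rw [mem_ball_zero_iff]
    have hx' : ‖x‖ ≤ ‖z₀‖ + ε := by
      have := mem_closedBall_iff_norm.1 hx
      calc ‖x‖ ≤ ‖x - z₀‖ + ‖z₀‖ := by simpa using norm_add_le (x - z₀) z₀
        _ ≤ ε + ‖z₀‖ := by linarith
        _ = ‖z₀‖ + ε := by ring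
    have : ‖(t:ℂ) * x‖ = |t| * ‖x‖ := by
      rw [norm_mul]; simp
    rw [this]
    have h1 : |t| ≤ 1 := abs_le.2 ⟨by linarith [ht.1], ht.2⟩
    have h2 : ‖z₀‖ + ε < 1 := by simp only [hε]; linarith
    calc |t| * ‖x‖ ≤ 1 * (‖z₀‖ + ε) := by
          apply mul_le_mul h1 hx' (norm_nonneg _) zero_le_one
      _ < 1 := by linarith
  -- compact set S
  have hS : IsCompact ((fun p : ℝ × ℂ => (p.1:ℂ) * p.2) '' (Icc (0:ℝ) 1 ×ˢ closedBall z₀ ε)) :=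
    ((isCompact_Icc).prod (isCompact_closedBall _ _)).image (by continuity)
  set S := ((fun p : ℝ × ℂ => (p.1:ℂ) * p.2) '' (Icc (0:ℝ) 1 ×ˢ closedBall z₀ ε))
  have hSsub : S ⊆ ball (0:ℂ) 1 := by
    rintro w ⟨⟨t, x⟩, ⟨ht, hx⟩, rfl⟩
    exact hmem t x ht hx
  obtain ⟨C₁, hC₁⟩ := hS.exists_bound_of_continuousOn (hfc.mono hSsub)
  obtain ⟨C₂, hC₂⟩ := hS.exists_bound_of_continuousOn (hfc'.mono hSsub)
  set C : ℝ := max C₁ C₂ ⊔ 0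
  have hC₁' : ∀ w ∈ S, ‖f w‖ ≤ C := fun w hw => (hC₁ w hw).trans ((le_max_left _ _).trans le_sup_left)
  have hC₂' : ∀ w ∈ S, ‖deriv f w‖ ≤ C := fun w hw => (hC₂ w hw).trans ((le_max_right _ _).trans le_sup_left)
  have hC0 : 0 ≤ C := le_sup_right
  -- derivative in x
  set F' : ℂ → ℝ → ℂ := fun x t => f ((t:ℂ) * x) + x * (deriv f ((t:ℂ) * x) * (t:ℂ)) with hF'
  have hballsub : ball z₀ ε ⊆ closedBall z₀ ε := ball_subset_closedBall
  have hSm : ∀ (t : ℝ), t ∈ Icc (0:ℝ) 1 → ∀ x ∈ closedBall z₀ ε, (t:ℂ) * x ∈ S := by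
    intro t ht x hx
    exact ⟨(t, x), ⟨ht, hx⟩, rfl⟩
  have hdiff : ∀ (t : ℝ), t ∈ Icc (0:ℝ) 1 → ∀ x ∈ ball z₀ ε,
      HasDerivAt (fun x => x * f ((t:ℂ) * x)) (F' x t) x := by
    intro t ht x hx
    have hmem' : (t:ℂ) * x ∈ ball (0:ℂ) 1 := hmem t x ht (hballsub hx)
    have h1 : HasDerivAt (fun x : ℂ => f ((t:ℂ) * x)) (deriv f ((t:ℂ) * x) * (t:ℂ)) x := by
      have hinner : HasDerivAt (fun x : ℂ => (t:ℂ) * x) (t:ℂ) x := by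
        simpa using (hasDerivAt_id x).const_mul (t:ℂ)
      exact (hfd _ hmem').comp x hinner
    have := (hasDerivAt_id' x).mul h1
    exact this.congr_deriv (by simp [hF'])
  -- continuity of integrand in t
  have hcont : ∀ x ∈ closedBall z₀ ε, ContinuousOn (fun t : ℝ => x * f ((t:ℂ) * x)) (Icc (0:ℝ) 1) := by
    intro x hx
    apply ContinuousOn.mul continuousOn_const
    apply hfc.comp (by fun_prop)
    intro t ht
    exact hmem t x ht hx
  have hcont' : ContinuousOn (F' z₀) (Icc (0:ℝ) 1) := by
    have hz₀m : z₀ ∈ closedBall z₀ ε := mem_closedBall_self hεpos.le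
    apply ContinuousOn.add
    · apply hfc.comp (by fun_prop)
      intro t ht; exact hmem t z₀ ht hz₀m
    · apply ContinuousOn.mul continuousOn_const
      apply ContinuousOn.mul _ (by fun_prop)
      apply hfc'.comp (by fun_prop)
      intro t ht; exact hmem t z₀ ht hz₀m
  have huIoc : Set.uIoc (0:ℝ) 1 ⊆ Icc (0:ℝ) 1 := by
    rw [uIoc_of_le (zero_le_one)]
    exact Ioc_subset_Icc_self
  have key := hasDerivAt_integral_of_dominated_loc_of_deriv_le (μ := MeasureTheory.volume)
    (F := fun x t => x * f ((t:ℂ) * x)) (F' := F') (x₀ := z₀) (a := 0) (b := 1)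
    (bound := fun _ => C + (‖z₀‖ + ε) * C) (s := ball z₀ ε) (ball_mem_nhds z₀ hεpos)
    ?_ ?_ ?_ ?_ ?_ ?_
  · obtain ⟨-, hkey⟩ := key
    refine hkey.congr_deriv ?_
    -- ∫ F' z₀ t = f z₀  via FTC
    have hFTC : ∀ t ∈ uIcc (0:ℝ) 1, HasDerivAt (fun t : ℝ => (t:ℂ) * f ((t:ℂ) * z₀)) (F' z₀ t) t := by
      intro t ht
      rw [uIcc_of_le zero_le_one] at ht
      have hmem' : (t:ℂ) * z₀ ∈ ball (0:ℂ) 1 := hmem t z₀ ht (mem_closedBall_self hεpos.le)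
      have hE : HasDerivAt (fun w : ℂ => w * f (w * z₀)) (f ((t:ℂ) * z₀) + (t:ℂ) * (deriv f ((t:ℂ) * z₀) * z₀)) (t:ℂ) := by
        have h1 : HasDerivAt (fun w : ℂ => f (w * z₀)) (deriv f ((t:ℂ) * z₀) * z₀) (t:ℂ) := by
          have hinner : HasDerivAt (fun w : ℂ => w * z₀) z₀ (t:ℂ) := by
            simpa using (hasDerivAt_id (t:ℂ)).mul_const z₀
          exact (hfd _ hmem').comp (t:ℂ) hinner
        have := (hasDerivAt_id' (t:ℂ)).mul h1
        exact this.congr_deriv (by simp)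
      have := hE.comp_ofReal
      convert this using 1
      simp only [hF']
      ring
    have hint : IntervalIntegrable (F' z₀) MeasureTheory.volume 0 1 := by
      apply ContinuousOn.intervalIntegrable
      rwa [uIcc_of_le zero_le_one]
    have := integral_eq_sub_of_hasDerivAt hFTC hint
    rw [this]
    simp
  · -- measurability eventually
    filter_upwards [ball_mem_nhds z₀ hεpos] with x hx
    apply ContinuousOn.aestronglyMeasurable _ measurableSet_uIoc
    exact (hcont x (hballsub hx)).mono huIoc
  · apply ContinuousOn.intervalIntegrable
    rw [uIcc_of_le zero_le_one]
    exact hcont z₀ (mem_closedBall_self hεpos.le)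
  · apply ContinuousOn.aestronglyMeasurable _ measurableSet_uIoc
    exact hcont'.mono huIoc
  · apply MeasureTheory.ae_of_all
    intro t ht x hx
    have ht' : t ∈ Icc (0:ℝ) 1 := huIoc ht
    have hxm : x ∈ closedBall z₀ ε := hballsub hx
    have hmem' : (t:ℂ) * x ∈ S := hSm t ht' x hxm
    have hxn : ‖x‖ ≤ ‖z₀‖ + ε := by
      have := mem_closedBall_iff_norm.1 hxm
      calc ‖x‖ ≤ ‖x - z₀‖ + ‖z₀‖ := by simpa using norm_add_le (x - z₀) z₀
        _ ≤ ε + ‖z₀‖ := by linarith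
        _ = ‖z₀‖ + ε := by ring
    have htabs : |t| ≤ 1 := abs_le.2 ⟨by linarith [ht'.1], ht'.2⟩
    calc ‖F' x t‖ ≤ ‖f ((t:ℂ) * x)‖ + ‖x * (deriv f ((t:ℂ) * x) * (t:ℂ))‖ := norm_add_le _ _
      _ ≤ C + (‖z₀‖ + ε) * C := by
          gcongr
          · exact hC₁' _ hmem'
          · rw [norm_mul, norm_mul]
            have h2 : ‖deriv f ((t:ℂ) * x)‖ ≤ C := hC₂' _ hmem'
            have h3 : ‖(t:ℂ)‖ ≤ 1 := by simpa using htabs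
            calc ‖x‖ * (‖deriv f ((t:ℂ)*x)‖ * ‖(t:ℂ)‖) ≤ (‖z₀‖ + ε) * (C * 1) := by
                  apply mul_le_mul hxn _ (by positivity) (by positivity)
                  exact mul_le_mul h2 h3 (norm_nonneg _) hC0
              _ = (‖z₀‖ + ε) * C := by ring
  · exact intervalIntegrable_const
  · apply MeasureTheory.ae_of_all
    intro t ht x hx
    exact hdiff t (huIoc ht) x hx


lemma jack_lemma {g dg : ℂ → ℂ} (hg0 : g 0 = 0)
    (hg : ∀ z ∈ ball (0:ℂ) 1, HasDerivAt g (dg z) z)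
    (hre : ∀ z ∈ ball (0:ℂ) 1, (z * dg z).re < 1/2) :
    ∀ z ∈ ball (0:ℂ) 1, ‖1 - Complex.exp (g z)‖ < 1 := by
  set ω : ℂ → ℂ := fun z => 1 - Complex.exp (g z) with hωdef
  set dω : ℂ → ℂ := fun z => (ω z - 1) * dg z with hdωdef
  have hω0 : ω 0 = 0 := by simp [hωdef, hg0]
  have hωd : ∀ z ∈ ball (0:ℂ) 1, HasDerivAt ω (dω z) z := by
    intro z hz
    have := ((hg z hz).cexp).const_sub 1
    refine this.congr_deriv ?_
    simp only [hdωdef, hωdef]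
    ring
  have hωc : ∀ z ∈ ball (0:ℂ) 1, ContinuousAt ω z := fun z hz => (hωd z hz).differentiableAt.continuousAt
  have hωne : ∀ z, ω z ≠ 1 := by
    intro z h
    have : Complex.exp (g z) = 0 := by
      have := h ▸ hωdef
      simp only [hωdef] at h
      linear_combination -h
    exact Complex.exp_ne_zero _ this
  by_contra hcon
  push_neg at hcon
  obtain ⟨z₁, hz₁, h1le⟩ := hcon
  rw [mem_ball_zero_iff] at hz₁
  -- compact set K
  set K : Set ℂ := closedBall (0:ℂ) ‖z₁‖ ∩ {z | 1 ≤ ‖ω z‖} with hKdef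
  have hKsub : K ⊆ ball (0:ℂ) 1 := fun z hz => by
    rw [mem_ball_zero_iff]
    exact lt_of_le_of_lt (mem_closedBall_zero_iff.1 hz.1) hz₁
  have hcbsub : closedBall (0:ℂ) ‖z₁‖ ⊆ ball (0:ℂ) 1 := fun z hz =>
    mem_ball_zero_iff.2 (lt_of_le_of_lt (mem_closedBall_zero_iff.1 hz) hz₁)
  have hKclosed : IsClosed K := by
    have : ContinuousOn ω (closedBall (0:ℂ) ‖z₁‖) := fun z hz => (hωc z (hcbsub hz)).continuousWithinAt
    have h2 : K = closedBall (0:ℂ) ‖z₁‖ ∩ (fun z => ‖ω z‖) ⁻¹' (Ici 1) := rfl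
    rw [h2]
    exact ContinuousOn.preimage_isClosed_of_isClosed (continuous_norm.comp_continuousOn this)
      isClosed_closedBall isClosed_Ici
  have hKcompact : IsCompact K := (isCompact_closedBall _ _).of_isClosed_subset hKclosed inter_subset_left
  have hKne : K.Nonempty := ⟨z₁, mem_closedBall_zero_iff.2 le_rfl, h1le⟩
  obtain ⟨z₀, hz₀K, hmin⟩ := hKcompact.exists_isMinOn hKne continuous_norm.continuousOn
  set r₀ : ℝ := ‖z₀‖ with hr₀def
  have hz₀B : z₀ ∈ ball (0:ℂ) 1 := hKsub hz₀K
  have hr₀1 : r₀ < 1 := mem_ball_zero_iff.1 hz₀B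
  have hr₀pos : 0 < r₀ := by
    rcases eq_or_lt_of_le (norm_nonneg z₀) with h | h
    · exfalso
      have hz₀0 : z₀ = 0 := by rwa [eq_comm, norm_eq_zero] at h
      have h2 : 1 ≤ ‖ω z₀‖ := hz₀K.2
      rw [hz₀0, hω0] at h2
      simp only [norm_zero] at h2
      linarith
    · exact h
  -- Claim 1
  have claim1 : ∀ z : ℂ, ‖z‖ < r₀ → ‖ω z‖ < 1 := by
    intro z hz
    by_contra hc
    push_neg at hc
    have hzK : z ∈ K := ⟨mem_closedBall_zero_iff.2 (hz.le.trans (mem_closedBall_zero_iff.1 hz₀K.1)), hc⟩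
    exact absurd (hmin hzK) (by simpa using hz)
  -- Claim 2
  have claim2 : ‖ω z₀‖ = 1 := by
    have h2' : 1 ≤ ‖ω z₀‖ := hz₀K.2
    rcases eq_or_lt_of_le h2' with h | h
    · exact h.symm
    exfalso
    have hcont : ContinuousOn (fun t : ℝ => ‖ω ((t:ℂ) * z₀)‖) (Icc (0:ℝ) 1) := by
      intro t ht
      apply ContinuousAt.continuousWithinAt
      have hmemB : (t:ℂ) * z₀ ∈ ball (0:ℂ) 1 := by
        rw [mem_ball_zero_iff, norm_mul, Complex.norm_real, Real.norm_eq_abs,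
          _root_.abs_of_nonneg ht.1]
        calc t * ‖z₀‖ ≤ 1 * ‖z₀‖ := mul_le_mul_of_nonneg_right ht.2 (norm_nonneg _)
          _ < 1 := by simpa using hr₀1
      have h2 : ContinuousAt (fun t : ℝ => (t:ℂ) * z₀) t := by fun_prop
      have h1 : ContinuousAt ω ((t:ℂ) * z₀) := hωc _ hmemB
      have h3 := ContinuousAt.comp (f := fun t : ℝ => (t:ℂ) * z₀) (g := ω) h1 h2
      have h4 := ContinuousAt.comp (g := fun z : ℂ => ‖z‖) continuous_norm.continuousAt h3
      simpa [Function.comp_def] using h4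
    have hIVT := intermediate_value_Icc zero_le_one hcont
    have h1mem : (1:ℝ) ∈ Icc (‖ω (((0:ℝ):ℂ) * z₀)‖) (‖ω (((1:ℝ):ℂ) * z₀)‖) := by
      constructor
      · simp [hω0]
      · simpa using h.le
    obtain ⟨t, ht, hteq⟩ := hIVT h1mem
    simp only [] at hteq
    rcases eq_or_lt_of_le ht.2 with h1 | h1
    · rw [h1] at hteq
      simp only [Complex.ofReal_one, one_mul] at hteq
      rw [hteq] at h
      exact lt_irrefl _ h
    · have hlt : ‖ω ((t:ℂ) * z₀)‖ < 1 := by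
        apply claim1
        rw [norm_mul, Complex.norm_real, Real.norm_eq_abs, _root_.abs_of_nonneg ht.1]
        calc t * ‖z₀‖ < 1 * ‖z₀‖ := mul_lt_mul_of_pos_right h1 hr₀pos
          _ = r₀ := one_mul _
      rw [hteq] at hlt
      exact lt_irrefl _ hlt
  -- Claim 3 (Schwarz)
  have claim3 : ∀ z ∈ ball (0:ℂ) r₀, ‖ω z‖ ≤ ‖z‖ / r₀ := by
    intro z hz
    have hd : DifferentiableOn ℂ ω (ball (0:ℂ) r₀) := by
      intro w hw
      have hwB : w ∈ ball (0:ℂ) 1 := by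
        rw [mem_ball_zero_iff] at hw ⊢
        exact hw.trans hr₀1
      exact (hωd w hwB).differentiableAt.differentiableWithinAt
    have hmaps : MapsTo ω (ball (0:ℂ) r₀) (ball (ω 0) 1) := by
      intro w hw
      rw [hω0, mem_ball_zero_iff]
      exact claim1 w (mem_ball_zero_iff.1 hw)
    have := Complex.dist_le_div_mul_dist_of_mapsTo_ball hd (hmaps.mono_right ball_subset_closedBall) hz
    rw [hω0, dist_zero_right, dist_zero_right] at this
    calc ‖ω z‖ = ‖ω z‖ := rfl
      _ ≤ 1 / r₀ * ‖z‖ := this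
      _ = ‖z‖ / r₀ := by ring
  -- Claim 4
  have claim4 : ∀ z : ℂ, ‖z‖ = r₀ → ‖ω z‖ ≤ 1 := by
    intro z hz
    have hzB : z ∈ ball (0:ℂ) 1 := mem_ball_zero_iff.2 (hz ▸ hr₀1)
    have hca : ContinuousAt (fun t : ℝ => ‖ω ((t:ℂ) * z)‖) 1 := by
      have h2 : ContinuousAt (fun t : ℝ => (t:ℂ) * z) 1 := by fun_prop
      have h1 : ContinuousAt ω (((1:ℝ):ℂ) * z) := by
        apply hωc
        simpa using hzB
      have h3 := ContinuousAt.comp (f := fun t : ℝ => (t:ℂ) * z) (g := ω) h1 h2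
      have h4 := ContinuousAt.comp (g := fun z : ℂ => ‖z‖) continuous_norm.continuousAt h3
      simpa [Function.comp_def] using h4
    have htend : Tendsto (fun t : ℝ => ‖ω ((t:ℂ) * z)‖) (𝓝[<] (1:ℝ)) (𝓝 (‖ω z‖)) := by
      have h5 := hca.tendsto
      simp only [Complex.ofReal_one, one_mul] at h5
      exact h5.mono_left nhdsWithin_le_nhds
    apply le_of_tendsto htend
    filter_upwards [Ioo_mem_nhdsLT_of_mem (⟨zero_lt_one, le_refl (1:ℝ)⟩ : (1:ℝ) ∈ Ioc (0:ℝ) 1)] with t ht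
    have hmem : (t:ℂ) * z ∈ ball (0:ℂ) r₀ := by
      rw [mem_ball_zero_iff, norm_mul, Complex.norm_real, Real.norm_eq_abs, _root_.abs_of_nonneg ht.1.le, hz]
      exact mul_lt_of_lt_one_left hr₀pos ht.2
    calc ‖ω ((t:ℂ) * z)‖ ≤ ‖(t:ℂ) * z‖ / r₀ := claim3 _ hmem
      _ = t := by
          rw [norm_mul, Complex.norm_real, Real.norm_eq_abs, _root_.abs_of_nonneg ht.1.le, hz]
          field_simp
      _ ≤ 1 := ht.2.le
  -- ψ and the boundary derivative
  set w : ℂ := ω z₀ with hwdef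
  have hwabs : ‖w‖ = 1 := claim2
  have hwns : Complex.normSq w = 1 := by
    rw [← Complex.sq_norm, hwabs]; norm_num
  have hcw : (starRingEnd ℂ) w * w = 1 := by
    rw [mul_comm, Complex.mul_conj, hwns]; norm_num
  set ψ : ℂ → ℂ := fun ζ => (starRingEnd ℂ) w * ω (ζ * z₀) with hψdef
  set A : ℂ := (starRingEnd ℂ) w * (dω z₀ * z₀) with hAdef
  have hψd : ∀ ζ : ℂ, ‖ζ‖ * r₀ < 1 → HasDerivAt ψ ((starRingEnd ℂ) w * (dω (ζ * z₀) * z₀)) ζ := by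
    intro ζ hζ
    have hmemB : ζ * z₀ ∈ ball (0:ℂ) 1 := by
      rw [mem_ball_zero_iff, norm_mul]; exact hζ
    have hinner : HasDerivAt (fun ζ : ℂ => ζ * z₀) z₀ ζ := by
      simpa using (hasDerivAt_id ζ).mul_const z₀
    have := ((hωd _ hmemB).comp ζ hinner).const_mul ((starRingEnd ℂ) w)
    simpa [mul_assoc] using this
  have hψ1 : HasDerivAt ψ A 1 := by
    have := hψd 1 (by simpa using hr₀1)
    simpa [hAdef] using this
  have hψone : ψ 1 = 1 := by
    have h1 : ψ 1 = (starRingEnd ℂ) w * w := by simp [hψdef, hwdef]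
    rw [h1, hcw]
  have hψle : ∀ ζ : ℂ, ‖ζ‖ ≤ 1 → ‖ψ ζ‖ ≤ ‖ζ‖ := by
    intro ζ hζ
    have habsψ : ‖ψ ζ‖ = ‖ω (ζ * z₀)‖ := by
      simp [hψdef, map_mul, Complex.norm_conj, hwabs]
    rcases lt_or_eq_of_le hζ with hlt | heq
    · rw [habsψ]
      have hmem : ζ * z₀ ∈ ball (0:ℂ) r₀ := by
        rw [mem_ball_zero_iff, norm_mul]
        calc ‖ζ‖ * ‖z₀‖ < 1 * r₀ := mul_lt_mul_of_pos_right hlt hr₀pos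
          _ = r₀ := one_mul _
      calc ‖ω (ζ * z₀)‖ ≤ ‖ζ * z₀‖ / r₀ := claim3 _ hmem
        _ = ‖ζ‖ := by rw [norm_mul, mul_div_assoc, div_self hr₀pos.ne', mul_one]
    · rw [habsψ, heq]
      exact claim4 _ (by rw [norm_mul, heq, one_mul])
  -- Real part of A is at least 1
  have hA_re : 1 ≤ A.re := by
    have hψreal : HasDerivAt (fun t : ℝ => ψ ((t:ℝ):ℂ)) A 1 := by
      have h0 : HasDerivAt ψ A (((1:ℝ):ℂ)) := by simpa using hψ1
      exact h0.comp_ofReal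
    have hρ : HasDerivAt (fun t : ℝ => (ψ ((t:ℝ):ℂ)).re) A.re 1 :=
      Complex.reCLM.hasFDerivAt.comp_hasDerivAt 1 hψreal
    have hslope := hasDerivAt_iff_tendsto_slope.1 hρ
    have hslope' : Tendsto (slope (fun t : ℝ => (ψ ((t:ℝ):ℂ)).re) 1) (𝓝[<] (1:ℝ)) (𝓝 A.re) :=
      hslope.mono_left (nhdsWithin_mono _ (fun x hx => ne_of_lt hx))
    apply ge_of_tendsto hslope'
    filter_upwards [Ioo_mem_nhdsLT_of_mem (⟨zero_lt_one, le_refl (1:ℝ)⟩ : (1:ℝ) ∈ Ioc (0:ℝ) 1)] with t ht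
    have h1 : (ψ ((t:ℝ):ℂ)).re ≤ t := by
      calc (ψ ((t:ℝ):ℂ)).re ≤ ‖ψ ((t:ℝ):ℂ)‖ := Complex.re_le_norm _
        _ ≤ ‖((t:ℝ):ℂ)‖ := hψle _ (by
            rw [Complex.norm_real, Real.norm_eq_abs]
            exact abs_le.2 ⟨by linarith [ht.1], ht.2.le⟩)
        _ = t := by rw [Complex.norm_real, Real.norm_eq_abs, _root_.abs_of_nonneg ht.1.le]
    have hψ1re : (ψ (((1:ℝ)):ℂ)).re = 1 := by
      rw [Complex.ofReal_one, hψone]; rfl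
    have hden : t - 1 < 0 := by linarith [ht.2]
    rw [slope_def_field, le_div_iff_of_neg hden]
    rw [hψ1re]
    linarith
  -- Imaginary part of A is 0
  have hA_im : A.im = 0 := by
    set c : ℝ → ℂ := fun θ => ψ (Complex.exp ((θ:ℝ) * Complex.I)) with hcdef
    have hc : HasDerivAt c (A * Complex.I) 0 := by
      have hE : HasDerivAt (fun v : ℂ => ψ (Complex.exp (v * Complex.I))) (A * Complex.I) 0 := by
        have h1 : HasDerivAt (fun v : ℂ => Complex.exp (v * Complex.I))
            (Complex.exp ((0:ℂ) * Complex.I) * Complex.I) 0 := by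
          have := ((hasDerivAt_id (0:ℂ)).mul_const Complex.I).cexp
          simpa only [id_eq, one_mul] using this
        have h2 : HasDerivAt ψ A (Complex.exp ((0:ℂ) * Complex.I)) := by
          simpa using hψ1
        have h3 := h2.comp 0 h1
        simpa [Function.comp_def] using h3
      have := hE.comp_ofReal (z := 0)
      simpa using this
    have hc0 : c 0 = 1 := by
      simp only [hcdef, Complex.ofReal_zero, zero_mul, Complex.exp_zero, hψone]
    have hcre : HasDerivAt (fun θ : ℝ => (c θ).re) ((A * Complex.I).re) 0 :=
      Complex.reCLM.hasFDerivAt.comp_hasDerivAt 0 hc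
    have hcim : HasDerivAt (fun θ : ℝ => (c θ).im) ((A * Complex.I).im) 0 :=
      Complex.imCLM.hasFDerivAt.comp_hasDerivAt 0 hc
    set v : ℝ → ℝ := fun θ => (c θ).re * (c θ).re + (c θ).im * (c θ).im with hvdef
    have hvd : HasDerivAt v ((A * Complex.I).re * (c 0).re + (c 0).re * (A * Complex.I).re
        + ((A * Complex.I).im * (c 0).im + (c 0).im * (A * Complex.I).im)) 0 :=
      (hcre.mul hcre).add (hcim.mul hcim)
    have hvmax : IsLocalMax v 0 := by
      apply Filter.Eventually.of_forall
      intro θ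
      have hn : ‖Complex.exp ((θ:ℝ) * Complex.I)‖ = 1 := by
        exact Complex.norm_exp_ofReal_mul_I θ
      have h1 : ‖c θ‖ ≤ 1 := by
        have := hψle (Complex.exp ((θ:ℝ) * Complex.I)) (le_of_eq hn)
        rw [hn] at this
        simpa [hcdef] using this
      have h2 : v θ = Complex.normSq (c θ) := by
        simp only [hvdef]; rw [Complex.normSq_apply]
      have h3 : v 0 = 1 := by simp only [hvdef]; rw [hc0]; norm_num
      rw [h3, h2, ← Complex.sq_norm]
      nlinarith [norm_nonneg (c θ)]
    have hzero := hvmax.hasDerivAt_eq_zero hvd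
    rw [hc0] at hzero
    simp only [Complex.one_re, Complex.one_im, mul_one, one_mul, mul_zero, zero_mul,
      add_zero, Complex.mul_I_re] at hzero
    linarith
  -- final contradiction
  have hwne1 : w ≠ 1 := by
    intro hw1
    have hA0 : A = 0 := by
      simp only [hAdef, hdωdef]
      rw [← hwdef, hw1]
      ring
    rw [hA0] at hA_re
    simp at hA_re
    linarith
  have hwre : w.re < 1 := by
    rcases lt_or_eq_of_le (Complex.re_le_norm w |>.trans hwabs.le) with h | h
    · exact h
    · exfalso
      apply hwne1
      have him : w.im = 0 := by
        have := hwns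
        rw [Complex.normSq_apply] at this
        nlinarith
      apply Complex.ext <;> simp [h, him]
  have hne0 : (1 - (starRingEnd ℂ) w) ≠ 0 := by
    intro hc0
    apply hwne1
    have : (starRingEnd ℂ) w = 1 := by linear_combination -hc0
    have := congrArg (starRingEnd ℂ) this
    simpa using this
  have hkey : A = (1 - (starRingEnd ℂ) w) * (dg z₀ * z₀) := by
    simp only [hAdef, hdωdef]
    rw [← hwdef]
    linear_combination (dg z₀ * z₀) * hcw
  have hz₀dg : z₀ * dg z₀ = A / (1 - (starRingEnd ℂ) w) := by
    rw [eq_div_iff hne0]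
    rw [hkey]
    ring
  have hdivre : (A / (1 - (starRingEnd ℂ) w)).re = A.re / 2 := by
    rw [Complex.div_re]
    have h1 : (1 - (starRingEnd ℂ) w).re = 1 - w.re := by simp
    have h2 : (1 - (starRingEnd ℂ) w).im = w.im := by simp
    have h3 : Complex.normSq (1 - (starRingEnd ℂ) w) = 2 - 2 * w.re := by
      rw [Complex.normSq_apply, h1, h2]
      have h4 := hwns
      rw [Complex.normSq_apply] at h4
      nlinarith
    rw [h1, h2, h3, hA_im]
    have hden : 2 - 2 * w.re ≠ 0 := by intro hc0; nlinarith
    have hden' : 1 - w.re ≠ 0 := (by linarith : (0:ℝ) < 1 - w.re).ne'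
    field_simp
    ring
  have hfin := hre z₀ hz₀B
  rw [hz₀dg, hdivre] at hfin
  linarith

end JPAux

/-- The class `G(α)`: analytic functions `h` on the unit disk with `h(0) = 0`, `h'(0) = 1`,
`h'(z) ≠ 0` on the disk, and `Re (z h''(z) / (α h'(z))) < 1/2` on the disk. -/
noncomputable def GClass (α : ℝ) (h : ℂ → ℂ) : Prop :=
  AnalyticOnNhd ℂ h (ball (0:ℂ) 1) ∧ h 0 = 0 ∧ deriv h 0 = 1 ∧
    (∀ z ∈ ball (0:ℂ) 1, deriv h z ≠ 0) ∧
    ∀ z ∈ ball (0:ℂ) 1, (z * deriv (deriv h) z / ((α : ℂ) * deriv h z)).re < 1/2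
theorem stmt_3 {α : ℝ} (hα0 : 0 < α) (hα1 : α ≤ 1) {h : ℂ → ℂ} (hG : GClass α h) :
    ∃ ω : ℂ → ℂ, AnalyticOnNhd ℂ ω (ball (0:ℂ) 1) ∧ ω 0 = 0 ∧
      (∀ z ∈ ball (0:ℂ) 1, ‖ω z‖ < 1) ∧
      ∀ z ∈ ball (0:ℂ) 1, deriv h z = (1 - ω z) ^ (α : ℂ) := by
  obtain ⟨hA, h00, hd0, hne, hrecl⟩ := hG
  have hαne : (α : ℂ) ≠ 0 := Complex.ofReal_ne_zero.2 hα0.ne'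
  have hA1 : AnalyticOnNhd ℂ (deriv h) (ball (0:ℂ) 1) := hA.deriv
  have hA2 : AnalyticOnNhd ℂ (deriv (deriv h)) (ball (0:ℂ) 1) := hA1.deriv
  set f : ℂ → ℂ := fun z => deriv (deriv h) z / deriv h z with hfdef
  have hf : AnalyticOnNhd ℂ f (ball (0:ℂ) 1) := fun z hz => (hA2 z hz).div (hA1 z hz) (hne z hz)
  obtain ⟨F, hF0, hFd⟩ := exists_primitive hf
  -- exp (F z) = deriv h z on the ball
  have hexpF : ∀ z ∈ ball (0:ℂ) 1, Complex.exp (F z) = deriv h z := by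
    have hφd : ∀ z ∈ ball (0:ℂ) 1,
        HasDerivAt (fun z => Complex.exp (-F z) * deriv h z) 0 z := by
      intro z hz
      have h1 : HasDerivAt (fun z => Complex.exp (-F z)) (Complex.exp (-F z) * (-f z)) z :=
        ((hFd z hz).neg).cexp
      have h2 : HasDerivAt (deriv h) (deriv (deriv h) z) z :=
        ((hA1 z hz).differentiableAt).hasDerivAt
      have h3 := h1.mul h2
      refine h3.congr_deriv ?_
      have hne' := hne z hz
      simp only [hfdef]
      field_simp
      ring
    have hconst : ∀ z ∈ ball (0:ℂ) 1,
        Complex.exp (-F z) * deriv h z = Complex.exp (-F 0) * deriv h 0 := by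
      intro z hz
      apply (convex_ball (0:ℂ) 1).is_const_of_fderivWithin_eq_zero
        (𝕜 := ℂ) (f := fun z => Complex.exp (-F z) * deriv h z)
      · intro w hw
        exact ((hφd w hw).differentiableAt).differentiableWithinAt
      · intro w hw
        rw [fderivWithin_of_isOpen isOpen_ball hw]
        have := (hφd w hw).hasFDerivAt
        rw [this.fderiv]
        ext v
        simp
      · exact hz
      · exact mem_ball_self one_pos
    intro z hz
    have := hconst z hz
    rw [hF0, hd0] at this
    simp only [neg_zero, Complex.exp_zero, one_mul, mul_one] at this
    have hene : Complex.exp (-F z) ≠ 0 := Complex.exp_ne_zero _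
    have : deriv h z = Complex.exp (F z) := by
      have h4 : Complex.exp (-F z) * deriv h z = 1 := this
      have h5 : Complex.exp (-F z) * Complex.exp (F z) = 1 := by
        rw [← Complex.exp_add]; simp
      calc deriv h z = (Complex.exp (-F z))⁻¹ * (Complex.exp (-F z) * deriv h z) := by
            field_simp
        _ = (Complex.exp (-F z))⁻¹ * (Complex.exp (-F z) * Complex.exp (F z)) := by rw [h4, h5]
        _ = Complex.exp (F z) := by field_simp
    exact this.symm
  set g : ℂ → ℂ := fun z => F z / (α : ℂ) with hgdef
  set dg : ℂ → ℂ := fun z => f z / (α : ℂ) with hdgdef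
  have hg0 : g 0 = 0 := by simp [hgdef, hF0]
  have hgd : ∀ z ∈ ball (0:ℂ) 1, HasDerivAt g (dg z) z := fun z hz => (hFd z hz).div_const _
  have hgre : ∀ z ∈ ball (0:ℂ) 1, (z * dg z).re < 1/2 := by
    intro z hz
    have := hrecl z hz
    have heq : z * dg z = z * deriv (deriv h) z / ((α : ℂ) * deriv h z) := by
      simp only [hdgdef, hfdef]
      field_simp
    rw [heq]
    exact this
  have hjack := jack_lemma hg0 hgd hgre
  refine ⟨fun z => 1 - Complex.exp (g z), ?_, by simp [hg0], hjack, ?_⟩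
  · -- analyticity
    have hFdiff : DifferentiableOn ℂ F (ball (0:ℂ) 1) := fun z hz =>
      ((hFd z hz).differentiableAt).differentiableWithinAt
    have hFan : AnalyticOnNhd ℂ F (ball (0:ℂ) 1) := hFdiff.analyticOnNhd isOpen_ball
    intro z hz
    apply AnalyticAt.sub analyticAt_const
    apply AnalyticAt.cexp
    exact ((hFan z hz).div analyticAt_const hαne)
  · -- the cpow formula
    -- first: Im (g z) ∈ (-π/2, π/2) by connectedness
    have hgc : ∀ z ∈ ball (0:ℂ) 1, ContinuousAt g z := fun z hz =>
      (hgd z hz).differentiableAt.continuousAt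
    have hcos : ∀ z ∈ ball (0:ℂ) 1, 0 < Real.cos ((g z).im) := by
      intro z hz
      have h1 := hjack z hz
      have h2 : Complex.normSq (1 - Complex.exp (g z)) < 1 := by
        rw [← Complex.sq_norm]
        nlinarith [norm_nonneg (1 - Complex.exp (g z))]
      have h3 : 0 < (Complex.exp (g z)).re := by
        have hns := Complex.normSq_sub (1 : ℂ) (Complex.exp (g z))
        have h4 : Complex.normSq (Complex.exp (g z)) > 0 :=
          Complex.normSq_pos.2 (Complex.exp_ne_zero _)
        have h5 : ((1:ℂ) * (starRingEnd ℂ) (Complex.exp (g z))).re = (Complex.exp (g z)).re := by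
          simp
        rw [h5] at hns
        simp only [Complex.normSq_one] at hns
        nlinarith
      rw [Complex.exp_re] at h3
      nlinarith [Real.exp_pos ((g z).re)]
    have hIm : ∀ z ∈ ball (0:ℂ) 1, |(g z).im| < Real.pi / 2 := by
      set u : Set ℂ := {z | z ∈ ball (0:ℂ) 1 ∧ |(g z).im| < Real.pi / 2} with hudef
      set v : Set ℂ := {z | z ∈ ball (0:ℂ) 1 ∧ Real.pi / 2 < |(g z).im|} with hvdef
      have hu_open : IsOpen u := by
        rw [isOpen_iff_mem_nhds]
        rintro z ⟨hz, hzu⟩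
        have hc : ContinuousAt (fun z => |(g z).im|) z :=
          (_root_.continuous_abs.continuousAt).comp ((Complex.continuous_im.continuousAt).comp (hgc z hz))
        have h1 : ∀ᶠ w in nhds z, |(g w).im| < Real.pi / 2 :=
          hc.eventually_lt continuousAt_const hzu
        have h2 : ∀ᶠ w in nhds z, w ∈ ball (0:ℂ) 1 := isOpen_ball.eventually_mem hz
        filter_upwards [h1, h2] with w hw1 hw2
        exact ⟨hw2, hw1⟩
      have hv_open : IsOpen v := by
        rw [isOpen_iff_mem_nhds]
        rintro z ⟨hz, hzv⟩
        have hc : ContinuousAt (fun z => |(g z).im|) z :=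
          (_root_.continuous_abs.continuousAt).comp ((Complex.continuous_im.continuousAt).comp (hgc z hz))
        have h1 : ∀ᶠ w in nhds z, Real.pi / 2 < |(g w).im| :=
          continuousAt_const.eventually_lt hc hzv
        have h2 : ∀ᶠ w in nhds z, w ∈ ball (0:ℂ) 1 := isOpen_ball.eventually_mem hz
        filter_upwards [h1, h2] with w hw1 hw2
        exact ⟨hw2, hw1⟩
      have hdisj : Disjoint u v := by
        rw [Set.disjoint_iff]
        rintro z ⟨⟨-, h1⟩, ⟨-, h2⟩⟩
        exact absurd (h1.trans h2) (lt_irrefl _)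
      have hcover : ball (0:ℂ) 1 ⊆ u ∪ v := by
        intro z hz
        rcases lt_trichotomy (|(g z).im|) (Real.pi / 2) with hl | he | hg'
        · exact Or.inl ⟨hz, hl⟩
        · exfalso
          have := hcos z hz
          have habs : Real.cos |(g z).im| = 0 := by rw [he]; exact Real.cos_pi_div_two
          rw [Real.cos_abs] at habs
          linarith
        · exact Or.inr ⟨hz, hg'⟩
      have hne' : (ball (0:ℂ) 1 ∩ u).Nonempty := by
        refine ⟨0, mem_ball_self one_pos, mem_ball_self one_pos, ?_⟩
        rw [hg0]
        simp only [Complex.zero_im, abs_zero]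
        positivity
      have := (((convex_ball (0:ℂ) 1)).isPreconnected).subset_left_of_subset_union
        hu_open hv_open hdisj hcover hne'
      intro z hz
      exact (this hz).2
    intro z hz
    have hIm' := hIm z hz
    have hπ : Real.pi / 2 < Real.pi := by linarith [Real.pi_pos]
    have hlog : Complex.log (Complex.exp (g z)) = g z := by
      apply Complex.log_exp
      · have := abs_lt.1 hIm'
        linarith
      · have := abs_lt.1 hIm'
        linarith
    have h1mo : (1 : ℂ) - (1 - Complex.exp (g z)) = Complex.exp (g z) := by ring
    rw [h1mo]
    rw [Complex.cpow_def_of_ne_zero (Complex.exp_ne_zero _)]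
    rw [hlog]
    have hga : g z * (α:ℂ) = F z := by
      simp only [hgdef]
      field_simp
    rw [hga]
    exact (hexpF z hz).symm
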